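/- For two quantum measurements M_i = {M_i^a} (i=0,1) with the same outcome set and a state ρ on X⊗Y, the trace distance between the post-measurement classical-quantum states ρ_i = Σ_a |a⟩⟨a| ⊗ M_i^a ρ (M_i^a)* is at most dis_ρ(M_0,M_1) = [Σ_a ‖M_0^a − M_1^a‖_ρ²]^{1/2}, where ‖M‖_ρ = √(Tr(M*Mρ)). -/

import Mathlib

open Matrix Kronecker ComplexOrder

/-- The trace norm of a matrix: the trace of `√(AᴴA)`. -/
noncomputable def traceNorm {m : Type*} [Fintype m] [DecidableEq m]
    (A : Matrix m m ℂ) : ℝ :=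
  (((Matrix.posSemidef_conjTranspose_mul_self A).1.eigenvectorUnitary.1 *
      diagonal (((↑) : ℝ → ℂ) ∘ (√·) ∘ (Matrix.posSemidef_conjTranspose_mul_self A).1.eigenvalues) *
      (star (Matrix.posSemidef_conjTranspose_mul_self A).1.eigenvectorUnitary :
        Matrix m m ℂ)).trace).re

/-- The trace distance between two matrices. -/
noncomputable def traceDist {m : Type*} [Fintype m] [DecidableEq m]
    (ρ σ : Matrix m m ℂ) : ℝ :=
  traceNorm (ρ - σ) / 2

/-- The state-dependent squared seminorm `‖M‖_ρ² = Tr(MᴴMρ)`. -/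
noncomputable def snormSq {m : Type*} [Fintype m] (ρ M : Matrix m m ℂ) : ℝ :=
  ((Mᴴ * M * ρ).trace).re

/-- The post-measurement classical-quantum state `∑ a |a⟩⟨a| ⊗ (M_a ⊗ I) ρ (M_a ⊗ I)ᴴ`
for a measurement acting on the first tensor factor of `ρ`. -/
noncomputable def postState {nx ny K : ℕ}
    (ρ : Matrix (Fin nx × Fin ny) (Fin nx × Fin ny) ℂ)
    (N : Fin K → Matrix (Fin nx) (Fin nx) ℂ) :
    Matrix (Fin K × (Fin nx × Fin ny)) (Fin K × (Fin nx × Fin ny)) ℂ :=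
  ∑ a, Matrix.single a a (1 : ℂ) ⊗ₖ
    ((N a ⊗ₖ (1 : Matrix (Fin ny) (Fin ny) ℂ)) * ρ *
      (N a ⊗ₖ (1 : Matrix (Fin ny) (Fin ny) ℂ))ᴴ)


variable {m : Type*} [Fintype m] [DecidableEq m]

set_option linter.unusedSectionVars false
set_option maxHeartbeats 1000000

namespace Matrix.PosSemidef

/-- matrix square root (the pre-CFC Mathlib definition) -/
noncomputable def sqrt {n : Type*} [Fintype n] [DecidableEq n] {A : Matrix n n ℂ}
    (hA : A.PosSemidef) : Matrix n n ℂ :=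
  hA.1.eigenvectorUnitary.1 * diagonal (((↑) : ℝ → ℂ) ∘ (√·) ∘ hA.1.eigenvalues) *
    (star hA.1.eigenvectorUnitary : Matrix n n ℂ)

lemma posSemidef_sqrt {n : Type*} [Fintype n] [DecidableEq n] {A : Matrix n n ℂ}
    (hA : A.PosSemidef) : hA.sqrt.PosSemidef := by
  unfold sqrt
  have h := (PosSemidef.diagonal (R := ℂ) (n := n)
    (d := ((↑) : ℝ → ℂ) ∘ (√·) ∘ hA.1.eigenvalues)
    (fun i => by simp [Complex.zero_le_real, Real.sqrt_nonneg])).mul_mul_conjTranspose_same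
    (hA.1.eigenvectorUnitary.1)
  rw [Matrix.star_eq_conjTranspose]
  exact h

lemma sqrt_mul_self {n : Type*} [Fintype n] [DecidableEq n] {A : Matrix n n ℂ}
    (hA : A.PosSemidef) : hA.sqrt * hA.sqrt = A := by
  have hV : (star hA.1.eigenvectorUnitary : Matrix n n ℂ) * hA.1.eigenvectorUnitary.1 = 1 :=
    Unitary.coe_star_mul_self _
  conv_rhs => rw [hA.1.spectral_theorem]
  rw [Unitary.conjStarAlgAut_apply]
  unfold sqrt
  calc _ = hA.1.eigenvectorUnitary.1 * (diagonal (((↑) : ℝ → ℂ) ∘ (√·) ∘ hA.1.eigenvalues) *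
        ((star hA.1.eigenvectorUnitary : Matrix n n ℂ) * hA.1.eigenvectorUnitary.1) *
        diagonal (((↑) : ℝ → ℂ) ∘ (√·) ∘ hA.1.eigenvalues)) *
        (star hA.1.eigenvectorUnitary : Matrix n n ℂ) := by simp only [Matrix.mul_assoc]
    _ = _ := by
      rw [hV, Matrix.mul_one, diagonal_mul_diagonal]
      congr 3
      funext i
      simp only [Function.comp_apply]
      rw [← Complex.ofReal_mul, Real.mul_self_sqrt (hA.eigenvalues_nonneg i)]
      rfl

section
open scoped MatrixOrder

lemma eq_sqrt_of_sq_eq {n : Type*} [Fintype n] [DecidableEq n] {A B : Matrix n n ℂ}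
    (hB : B.PosSemidef) (hA : A.PosSemidef) (h : B ^ 2 = A) : B = hA.sqrt := by
  have h1 : CFC.sqrt A = B := CFC.sqrt_unique (by rw [← h, sq]) hB.nonneg
  have h2 : CFC.sqrt A = hA.sqrt := CFC.sqrt_unique (sqrt_mul_self hA) (posSemidef_sqrt hA).nonneg
  rw [← h1, h2]

end

end Matrix.PosSemidef

/-- squared Frobenius norm -/
noncomputable def frobSq {m n : Type*} [Fintype m] [Fintype n] (A : Matrix m n ℂ) : ℝ :=
  ((Aᴴ * A).trace).re

lemma trace_re_nonneg {A : Matrix m m ℂ} (hA : A.PosSemidef) : 0 ≤ A.trace.re := by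
  exact (Complex.nonneg_iff.mp hA.trace_nonneg).1

lemma frobSq_nonneg {m n : Type*} [Fintype m] [Fintype n] (A : Matrix m n ℂ) :
    0 ≤ frobSq A := by
  classical
  unfold frobSq
  rw [Matrix.trace]
  simp only [Matrix.diag_apply, Matrix.mul_apply, Matrix.conjTranspose_apply]
  rw [Complex.re_sum]
  refine Finset.sum_nonneg fun j _ => ?_
  rw [Complex.re_sum]
  refine Finset.sum_nonneg fun i _ => ?_
  simpa [Complex.normSq_apply] using Complex.normSq_nonneg (A i j)

lemma frobSq_conjTranspose {m n : Type*} [Fintype m] [Fintype n] (A : Matrix m n ℂ) :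
    frobSq Aᴴ = frobSq A := by
  unfold frobSq
  rw [Matrix.conjTranspose_conjTranspose, Matrix.trace_mul_comm]

set_option linter.unusedSectionVars false

lemma trace_conj_expand {m n : Type*} [Fintype m] [Fintype n] (A B : Matrix m n ℂ) :
    ((Aᴴ * B).trace).re = ∑ p : m × n, ((starRingEnd ℂ) (A p.1 p.2) * B p.1 p.2).re := by
  rw [Matrix.trace, Complex.re_sum]
  simp only [Matrix.diag_apply, Matrix.mul_apply, Matrix.conjTranspose_apply, Complex.re_sum]
  rw [Fintype.sum_prod_type, Finset.sum_comm]
  rfl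

lemma frobSq_eq_sum {m n : Type*} [Fintype m] [Fintype n] (A : Matrix m n ℂ) :
    frobSq A = ∑ p : m × n, ‖A p.1 p.2‖ ^ 2 := by
  rw [frobSq, trace_conj_expand]
  refine Finset.sum_congr rfl fun p _ => ?_
  simp [← Complex.normSq_eq_conj_mul_self, Complex.sq_norm]

lemma trace_conj_re_le {m n : Type*} [Fintype m] [Fintype n] (A B : Matrix m n ℂ) :
    ((Aᴴ * B).trace).re ≤ Real.sqrt (frobSq A) * Real.sqrt (frobSq B) := by
  rw [trace_conj_expand, frobSq_eq_sum, frobSq_eq_sum]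
  calc ∑ p : m × n, ((starRingEnd ℂ) (A p.1 p.2) * B p.1 p.2).re
      ≤ ∑ p : m × n, ‖A p.1 p.2‖ * ‖B p.1 p.2‖ := by
        refine Finset.sum_le_sum fun p _ => ?_
        calc ((starRingEnd ℂ) (A p.1 p.2) * B p.1 p.2).re
            ≤ ‖(starRingEnd ℂ) (A p.1 p.2) * B p.1 p.2‖ := Complex.re_le_norm _
          _ = ‖A p.1 p.2‖ * ‖B p.1 p.2‖ := by
              rw [norm_mul, Complex.norm_conj]
    _ ≤ _ := Real.sum_mul_le_sqrt_mul_sqrt _ _ _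

lemma frobSq_contraction_mul {n : Type*} [Fintype n] [DecidableEq n] {C : Matrix m m ℂ}
    (hC : (1 - Cᴴ * C).PosSemidef) (B : Matrix m n ℂ) :
    frobSq (C * B) ≤ ((Bᴴ * B).trace).re := by
  have h := trace_re_nonneg (hC.conjTranspose_mul_mul_same B)
  have hexp : Bᴴ * (1 - Cᴴ * C) * B = Bᴴ * B - (C * B)ᴴ * (C * B) := by
    simp [Matrix.mul_sub, Matrix.sub_mul, Matrix.conjTranspose_mul, Matrix.mul_assoc]
  rw [hexp, Matrix.trace_sub, Complex.sub_re] at h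
  unfold frobSq
  linarith

lemma polar_exists (A : Matrix m m ℂ) :
    ∃ U : Matrix m m ℂ, (1 - Uᴴ * U).PosSemidef ∧
      A = U * (Matrix.posSemidef_conjTranspose_mul_self A).sqrt ∧
      Uᴴ * A = (Matrix.posSemidef_conjTranspose_mul_self A).sqrt := by
  set hP := Matrix.posSemidef_conjTranspose_mul_self A with hPdef
  set S := hP.sqrt with hSdef
  have hS : S.PosSemidef := hP.posSemidef_sqrt
  have hAS : S * S = Aᴴ * A := hP.sqrt_mul_self
  set h : S.IsHermitian := hS.1 with hhdef
  set V : Matrix m m ℂ := (h.eigenvectorUnitary : Matrix m m ℂ) with hVdef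
  have hV1 : star V * V = 1 := Matrix.mem_unitaryGroup_iff'.mp h.eigenvectorUnitary.2
  have hV2 : V * star V = 1 := Matrix.mem_unitaryGroup_iff.mp h.eigenvectorUnitary.2
  set ev := h.eigenvalues with hevdef
  set d : m → ℂ := fun i => (ev i : ℂ) with hddef
  set g : m → ℂ := fun i => if ev i = 0 then 0 else (ev i : ℂ)⁻¹ with hgdef
  set q : m → ℂ := fun i => if ev i = 0 then 0 else 1 with hqdef
  have mulD : ∀ d1 d2 : m → ℂ,
      (V * Matrix.diagonal d1 * star V) * (V * Matrix.diagonal d2 * star V)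
        = V * Matrix.diagonal (d1 * d2) * star V := by
    intro d1 d2
    calc (V * Matrix.diagonal d1 * star V) * (V * Matrix.diagonal d2 * star V)
        = V * Matrix.diagonal d1 * (star V * V) * Matrix.diagonal d2 * star V := by
          simp only [Matrix.mul_assoc]
      _ = V * (Matrix.diagonal d1 * Matrix.diagonal d2) * star V := by
          rw [hV1, Matrix.mul_one]; simp only [Matrix.mul_assoc]
      _ = V * Matrix.diagonal (d1 * d2) * star V := by
          rw [Matrix.diagonal_mul_diagonal]; rfl
  have hSspec : S = V * Matrix.diagonal d * star V := by
    have := h.spectral_theorem; rw [Unitary.conjStarAlgAut_apply] at this; exact this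
  set Sinv : Matrix m m ℂ := V * Matrix.diagonal g * star V with hSinvdef
  set Q : Matrix m m ℂ := V * Matrix.diagonal q * star V with hQdef
  have hgd : g * d = q := by
    funext i
    by_cases hi : ev i = 0 <;>
      simp [hgdef, hddef, hqdef, hi, inv_mul_cancel₀, Complex.ofReal_ne_zero]
  have hdg : d * g = q := by rw [mul_comm, hgd]
  have hdq : d * q = d := by
    funext i
    by_cases hi : ev i = 0 <;> simp [hgdef, hddef, hqdef, hi]
  have hqd : q * d = d := by rw [mul_comm, hdq]
  have hqq : q * q = q := by
    funext i
    by_cases hi : ev i = 0 <;> simp [hqdef, hi]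
  have hSinvS : Sinv * S = Q := by rw [hSspec, hSinvdef, mulD, hgd]
  have hSSinv : S * Sinv = Q := by rw [hSspec, hSinvdef, mulD, hdg]
  have hSQ : S * Q = S := by rw [hSspec, hQdef, mulD, hdq, ← hSspec]
  have hQQ : Q * Q = Q := by rw [hQdef, mulD, hqq]
  have conjT : ∀ (dd : m → ℂ), (V * Matrix.diagonal dd * star V)ᴴ
      = V * Matrix.diagonal (star dd) * star V := by
    intro dd
    simp [Matrix.conjTranspose_mul, Matrix.diagonal_conjTranspose,
      Matrix.star_eq_conjTranspose, Matrix.conjTranspose_conjTranspose, Matrix.mul_assoc]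
  have hstarg : star g = g := by
    funext i
    by_cases hi : ev i = 0 <;> simp [hgdef, hi, ← Complex.ofReal_inv]
  have hstarq : star q = q := by
    funext i
    by_cases hi : ev i = 0 <;> simp [hqdef, hi]
  have hSinvH : Sinvᴴ = Sinv := by rw [hSinvdef, conjT, hstarg]
  have hQH : Qᴴ = Q := by rw [hQdef, conjT, hstarq]
  set U : Matrix m m ℂ := A * Sinv with hUdef
  have hUU : Uᴴ * U = Q := by
    calc Uᴴ * U = Sinvᴴ * (Aᴴ * A) * Sinv := by
          rw [hUdef, Matrix.conjTranspose_mul]; simp only [Matrix.mul_assoc]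
      _ = Sinv * (S * S) * Sinv := by rw [hSinvH, hAS]
      _ = (Sinv * S) * (S * Sinv) := by simp only [Matrix.mul_assoc]
      _ = Q := by rw [hSinvS, hSSinv, hQQ]
  have hAQ : A * Q = A := by
    have hX : (A * (1 - Q))ᴴ * (A * (1 - Q)) = 0 := by
      have h1Q : (1 - Q : Matrix m m ℂ)ᴴ = 1 - Q := by
        rw [Matrix.conjTranspose_sub, Matrix.conjTranspose_one, hQH]
      have hS1Q : S * (1 - Q) = 0 := by
        rw [Matrix.mul_sub, Matrix.mul_one, hSQ, sub_self]
      have h1QS : (1 - Q) * S = 0 := by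
        have : Q * S = S := by
          have := congrArg Matrix.conjTranspose hSQ
          rwa [Matrix.conjTranspose_mul, hQH, hS.1.eq] at this
        rw [Matrix.sub_mul, Matrix.one_mul, this, sub_self]
      calc (A * (1 - Q))ᴴ * (A * (1 - Q))
          = (1 - Q)ᴴ * (Aᴴ * A) * (1 - Q) := by
            rw [Matrix.conjTranspose_mul]; simp only [Matrix.mul_assoc]
        _ = ((1 - Q) * S) * (S * (1 - Q)) := by
            rw [h1Q, ← hAS]; simp only [Matrix.mul_assoc]
        _ = 0 := by rw [hS1Q, Matrix.mul_zero]
    have := Matrix.conjTranspose_mul_self_eq_zero.mp hX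
    have h2 : A * 1 - A * Q = 0 := by rw [← Matrix.mul_sub]; exact this
    rw [Matrix.mul_one] at h2
    exact (sub_eq_zero.mp h2).symm
  have hpos : (1 - Uᴴ * U).PosSemidef := by
    rw [hUU]
    have h1 : (1 : Matrix m m ℂ) = V * Matrix.diagonal (fun _ => (1 : ℂ)) * star V := by
      rw [Matrix.diagonal_one, Matrix.mul_one, hV2]
    have h2 : (1 : Matrix m m ℂ) - Q = V * Matrix.diagonal (fun i => 1 - q i) * star V := by
      rw [h1, hQdef, ← Matrix.sub_mul, ← Matrix.mul_sub, ← Matrix.diagonal_sub]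
    rw [h2, Matrix.star_eq_conjTranspose V]
    refine Matrix.PosSemidef.mul_mul_conjTranspose_same ?_ V
    refine Matrix.PosSemidef.diagonal fun i => ?_
    by_cases hi : ev i = 0 <;> simp [hqdef, hi]
  have hQS : Q * S = S := by
    have := congrArg Matrix.conjTranspose hSQ
    rwa [Matrix.conjTranspose_mul, hQH, hS.1.eq] at this
  refine ⟨U, hpos, ?_, ?_⟩
  case refine_2 =>
    calc Uᴴ * A = Sinvᴴ * (Aᴴ * A) := by
          rw [hUdef, Matrix.conjTranspose_mul]; simp only [Matrix.mul_assoc]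
      _ = Sinv * (S * S) := by rw [hSinvH, hAS]
      _ = (Sinv * S) * S := by simp only [Matrix.mul_assoc]
      _ = S := by rw [hSinvS, hQS]
  calc A = A * Q := hAQ.symm
    _ = A * (Sinv * S) := by rw [hSinvS]
    _ = U * S := by simp only [hUdef, Matrix.mul_assoc]

lemma traceNorm_nonneg (A : Matrix m m ℂ) : 0 ≤ traceNorm A :=
  trace_re_nonneg (Matrix.posSemidef_conjTranspose_mul_self A).posSemidef_sqrt

lemma traceNorm_dual_le {C A : Matrix m m ℂ} (hC : (1 - Cᴴ * C).PosSemidef) :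
    ((Cᴴ * A).trace).re ≤ traceNorm A := by
  obtain ⟨U, hU, hA, hUA⟩ := polar_exists A
  set hP := Matrix.posSemidef_conjTranspose_mul_self A
  set S := hP.sqrt with hSdef
  have hS : S.PosSemidef := hP.posSemidef_sqrt
  set R := hS.sqrt with hRdef
  have hRR : R * R = S := hS.sqrt_mul_self
  have hRH : Rᴴ = R := hS.posSemidef_sqrt.1
  have hRtr : ((Rᴴ * R).trace).re = traceNorm A := by
    rw [hRH, hRR]; rfl
  have hkey : Cᴴ * A = Cᴴ * U * R * R := by
    rw [hA, ← hRR]; simp only [Matrix.mul_assoc]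
  have hkey2 : ((Cᴴ * A).trace).re = (((C * R)ᴴ * (U * R)).trace).re := by
    rw [hkey, Matrix.trace_mul_comm, Matrix.conjTranspose_mul, hRH]
    congr 2
    simp only [Matrix.mul_assoc]
  have hCR : frobSq (C * R) ≤ traceNorm A := by
    have := frobSq_contraction_mul hC R; linarith
  have hUR : frobSq (U * R) ≤ traceNorm A := by
    have := frobSq_contraction_mul hU R; linarith
  calc ((Cᴴ * A).trace).re = (((C * R)ᴴ * (U * R)).trace).re := hkey2
    _ ≤ Real.sqrt (frobSq (C * R)) * Real.sqrt (frobSq (U * R)) := trace_conj_re_le _ _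
    _ ≤ Real.sqrt (traceNorm A) * Real.sqrt (traceNorm A) := by
        exact mul_le_mul (Real.sqrt_le_sqrt hCR) (Real.sqrt_le_sqrt hUR)
          (Real.sqrt_nonneg _) (Real.sqrt_nonneg _)
    _ = traceNorm A := Real.mul_self_sqrt (traceNorm_nonneg A)

lemma traceNorm_dual_eq (A : Matrix m m ℂ) :
    ∃ U : Matrix m m ℂ, (1 - Uᴴ * U).PosSemidef ∧ ((Uᴴ * A).trace).re = traceNorm A := by
  obtain ⟨U, hU, hA, hUA⟩ := polar_exists A
  exact ⟨U, hU, by rw [hUA]; rfl⟩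

lemma traceNorm_add_le (A B : Matrix m m ℂ) :
    traceNorm (A + B) ≤ traceNorm A + traceNorm B := by
  obtain ⟨U, hU, hEq⟩ := traceNorm_dual_eq (A + B)
  rw [← hEq, Matrix.mul_add, Matrix.trace_add, Complex.add_re]
  exact add_le_add (traceNorm_dual_le hU) (traceNorm_dual_le hU)

/-- Hölder: trace norm of a product bounded by Frobenius norms. -/
lemma traceNorm_mul_le (X Y : Matrix m m ℂ) :
    traceNorm (X * Y) ≤ Real.sqrt (frobSq X) * Real.sqrt (frobSq Y) := by
  obtain ⟨U, hU, hEq⟩ := traceNorm_dual_eq (X * Y)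
  rw [← hEq]
  have h1 : ((Uᴴ * (X * Y)).trace).re = (((U * Yᴴ)ᴴ * X).trace).re := by
    rw [Matrix.conjTranspose_mul, Matrix.conjTranspose_conjTranspose, ← Matrix.mul_assoc,
      Matrix.trace_mul_comm]
    congr 2
    simp only [Matrix.mul_assoc]
  have h2 : frobSq (U * Yᴴ) ≤ frobSq Y := by
    have := frobSq_contraction_mul hU Yᴴ
    have h3 : ((Yᴴᴴ * Yᴴ).trace).re = frobSq Y := by
      rw [← frobSq_conjTranspose Y]; rfl
    linarith
  calc ((Uᴴ * (X * Y)).trace).re = (((U * Yᴴ)ᴴ * X).trace).re := h1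
    _ ≤ Real.sqrt (frobSq (U * Yᴴ)) * Real.sqrt (frobSq X) := trace_conj_re_le _ _
    _ ≤ Real.sqrt (frobSq Y) * Real.sqrt (frobSq X) := by
        exact mul_le_mul_of_nonneg_right (Real.sqrt_le_sqrt h2) (Real.sqrt_nonneg _)
    _ = Real.sqrt (frobSq X) * Real.sqrt (frobSq Y) := mul_comm _ _

lemma posSemidef_sum {n : Type*} [Fintype n] {K : Type*} (s : Finset K)
    (f : K → Matrix n n ℂ) (h : ∀ a ∈ s, (f a).PosSemidef) :
    (∑ a ∈ s, f a).PosSemidef := by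
  classical
  induction s using Finset.induction_on with
  | empty => simpa using Matrix.PosSemidef.zero
  | insert _ _ hnotmem ih =>
    rw [Finset.sum_insert hnotmem]
    exact ((h _ (Finset.mem_insert_self _ _)).add
      (ih fun a ha => h a (Finset.mem_insert_of_mem ha)))

lemma kronecker_conjTranspose {l m n p : Type*} (A : Matrix l m ℂ) (B : Matrix n p ℂ) :
    (A ⊗ₖ B)ᴴ = Aᴴ ⊗ₖ Bᴴ := by
  ext ⟨i, j⟩ ⟨k, l⟩
  simp [Matrix.conjTranspose_apply, Matrix.kronecker_apply]

lemma stdBasis_conjTranspose {K : Type*} [DecidableEq K] (a : K) :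
    (Matrix.single a a (1 : ℂ))ᴴ = Matrix.single a a (1 : ℂ) := by
  ext i j
  simp [Matrix.conjTranspose_apply, Matrix.single, and_comm]

lemma stdBasis_mul_self {K : Type*} [Fintype K] [DecidableEq K] (a : K) :
    Matrix.single a a (1 : ℂ) * Matrix.single a a (1 : ℂ)
      = Matrix.single a a (1 : ℂ) := by
  rw [Matrix.single_mul_single_same, one_mul]

lemma stdBasis_trace {K : Type*} [Fintype K] [DecidableEq K] (a : K) :
    (Matrix.single a a (1 : ℂ)).trace = 1 := by
  simp [Matrix.trace, Matrix.diag, Matrix.single]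

lemma blockDiag_mul {K : Type*} [Fintype K] [DecidableEq K] {n : Type*} [Fintype n]
    [DecidableEq n] (X Y : K → Matrix n n ℂ) :
    (∑ a, Matrix.single a a (1 : ℂ) ⊗ₖ X a) *
      (∑ b, Matrix.single b b (1 : ℂ) ⊗ₖ Y b)
      = ∑ a, Matrix.single a a (1 : ℂ) ⊗ₖ (X a * Y a) := by
  rw [Finset.sum_mul_sum]
  simp only [← Matrix.mul_kronecker_mul]
  refine Finset.sum_congr rfl fun a _ => ?_
  rw [Finset.sum_eq_single a]
  · rw [stdBasis_mul_self]
  · intro b _ hb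
    rw [Matrix.single_mul_single_of_ne (h := Ne.symm hb)]  -- may need arg fix
    exact Matrix.zero_kronecker _
  · intro ha; exact absurd (Finset.mem_univ a) ha

lemma blockDiag_conjTranspose {K : Type*} [Fintype K] [DecidableEq K] {n : Type*} [Fintype n]
    (X : K → Matrix n n ℂ) :
    (∑ a, Matrix.single a a (1 : ℂ) ⊗ₖ X a)ᴴ
      = ∑ a, Matrix.single a a (1 : ℂ) ⊗ₖ (X a)ᴴ := by
  rw [Matrix.conjTranspose_sum]
  exact Finset.sum_congr rfl fun a _ => by
    rw [kronecker_conjTranspose, stdBasis_conjTranspose]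

lemma posSemidef_stdBasis_kron {K : Type*} [Fintype K] [DecidableEq K] {n : Type*} [Fintype n]
    [DecidableEq n] (a : K) {S : Matrix n n ℂ} (hS : S.PosSemidef) :
    (Matrix.single a a (1 : ℂ) ⊗ₖ S).PosSemidef := by
  have hR : S = hS.sqrt * hS.sqrt := hS.sqrt_mul_self.symm
  have key : Matrix.single a a (1 : ℂ) ⊗ₖ S
      = (Matrix.single a a (1 : ℂ) ⊗ₖ hS.sqrt)ᴴ *
        (Matrix.single a a (1 : ℂ) ⊗ₖ hS.sqrt) := by
    rw [kronecker_conjTranspose, stdBasis_conjTranspose, hS.posSemidef_sqrt.1.eq,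
      ← Matrix.mul_kronecker_mul, stdBasis_mul_self, ← hR]
  rw [key]
  exact Matrix.posSemidef_conjTranspose_mul_self _

lemma traceNorm_blockDiag {K : Type*} [Fintype K] [DecidableEq K] {n : Type*} [Fintype n]
    [DecidableEq n] (D : K → Matrix n n ℂ) :
    traceNorm (∑ a, Matrix.single a a (1 : ℂ) ⊗ₖ D a) = ∑ a, traceNorm (D a) := by
  set Δ := ∑ a, Matrix.single a a (1 : ℂ) ⊗ₖ D a with hΔ
  set T := ∑ a, Matrix.single a a (1 : ℂ) ⊗ₖ
    (Matrix.posSemidef_conjTranspose_mul_self (D a)).sqrt with hT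
  have hTpsd : T.PosSemidef := by
    refine posSemidef_sum _ _ fun a _ => ?_
    exact posSemidef_stdBasis_kron a
      (Matrix.posSemidef_conjTranspose_mul_self (D a)).posSemidef_sqrt
  have hTsq : T ^ 2 = Δᴴ * Δ := by
    rw [pow_two, hT, hΔ, blockDiag_mul, _root_.blockDiag_conjTranspose, blockDiag_mul]
    exact Finset.sum_congr rfl fun a _ => by
      rw [(Matrix.posSemidef_conjTranspose_mul_self (D a)).sqrt_mul_self]
  have hsqrt : T = (Matrix.posSemidef_conjTranspose_mul_self Δ).sqrt :=
    hTpsd.eq_sqrt_of_sq_eq _ hTsq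
  show ((Matrix.posSemidef_conjTranspose_mul_self Δ).sqrt.trace).re = _
  rw [← hsqrt, hT, Matrix.trace_sum, Complex.re_sum]
  refine Finset.sum_congr rfl fun a _ => ?_
  rw [Matrix.trace_kronecker, stdBasis_trace, one_mul]
  rfl

lemma kron_sub_right {l m n p : Type*} (A : Matrix l m ℂ) (B C : Matrix n p ℂ) :
    A ⊗ₖ (B - C) = A ⊗ₖ B - A ⊗ₖ C := by
  ext ⟨i, j⟩ ⟨k, l⟩
  simp [Matrix.kronecker_apply, mul_sub]

lemma kron_sub_left {l m n p : Type*} (A B : Matrix l m ℂ) (C : Matrix n p ℂ) :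
    (A - B) ⊗ₖ C = A ⊗ₖ C - B ⊗ₖ C := by
  ext ⟨i, j⟩ ⟨k, l⟩
  simp [Matrix.kronecker_apply, sub_mul]

lemma kron_sum_left {l m n p K : Type*} [Fintype K] (f : K → Matrix l m ℂ)
    (B : Matrix n p ℂ) :
    ∑ a : K, (f a ⊗ₖ B) = (∑ a : K, f a) ⊗ₖ B := by
  ext ⟨i, j⟩ ⟨k, l⟩
  simp [Matrix.kronecker_apply, Matrix.sum_apply, Finset.sum_mul]

lemma snorm_re_nonneg {n : Type*} [Fintype n] [DecidableEq n] {ρ : Matrix n n ℂ} (hρ : ρ.PosSemidef)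
    (X : Matrix n n ℂ) : 0 ≤ ((Xᴴ * X * ρ).trace).re := by
  have h : (Xᴴ * X * ρ).trace = (X * ρ * Xᴴ).trace := by
    rw [Matrix.mul_assoc, Matrix.trace_mul_comm]
  rw [h]
  exact trace_re_nonneg (hρ.mul_mul_conjTranspose_same X)

lemma frobSq_mul_sqrt {n : Type*} [Fintype n] [DecidableEq n] {ρ : Matrix n n ℂ}
    (hρ : ρ.PosSemidef) (X : Matrix n n ℂ) :
    frobSq (X * hρ.sqrt) = ((Xᴴ * X * ρ).trace).re := by
  have hRH : hρ.sqrtᴴ = hρ.sqrt := hρ.posSemidef_sqrt.1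
  unfold frobSq
  rw [Matrix.conjTranspose_mul, hRH]
  have h1 : hρ.sqrt * Xᴴ * (X * hρ.sqrt) = hρ.sqrt * (Xᴴ * X * hρ.sqrt) := by
    simp only [Matrix.mul_assoc]
  rw [h1, Matrix.trace_mul_comm]
  have h2 : Xᴴ * X * hρ.sqrt * hρ.sqrt = Xᴴ * X * ρ := by
    rw [Matrix.mul_assoc (Xᴴ * X), hρ.sqrt_mul_self]
  rw [h2]

lemma frobSq_sqrt_mul_ct {n : Type*} [Fintype n] [DecidableEq n] {ρ : Matrix n n ℂ}
    (hρ : ρ.PosSemidef) (Y : Matrix n n ℂ) :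
    frobSq (hρ.sqrt * Yᴴ) = ((Yᴴ * Y * ρ).trace).re := by
  have hRH : hρ.sqrtᴴ = hρ.sqrt := hρ.posSemidef_sqrt.1
  have h : hρ.sqrt * Yᴴ = (Y * hρ.sqrt)ᴴ := by
    rw [Matrix.conjTranspose_mul, hRH]
  rw [h, frobSq_conjTranspose, frobSq_mul_sqrt hρ]

/-- The trace distance of the post-measurement states of two measurements with the same
outcome set is bounded by the state-dependent distance `dis_ρ(M₀,M₁)`. -/
theorem traceDist_postState_le {nx ny K : ℕ}
    (ρ : Matrix (Fin nx × Fin ny) (Fin nx × Fin ny) ℂ)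
    (hρ : ρ.PosSemidef) (htr : ρ.trace = 1)
    (M : Fin 2 → Fin K → Matrix (Fin nx) (Fin nx) ℂ)
    (hcomp : ∀ i, ∑ a, (M i a)ᴴ * (M i a) = 1) :
    traceDist (postState ρ (M 0)) (postState ρ (M 1)) ≤
      Real.sqrt (∑ a, snormSq ρ ((M 0 a - M 1 a) ⊗ₖ (1 : Matrix (Fin ny) (Fin ny) ℂ))) := by
  classical
  set N : Fin 2 → Fin K → Matrix (Fin nx × Fin ny) (Fin nx × Fin ny) ℂ :=
    fun i a => (M i a) ⊗ₖ (1 : Matrix (Fin ny) (Fin ny) ℂ) with hN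
  set Δk : Fin K → Matrix (Fin nx × Fin ny) (Fin nx × Fin ny) ℂ :=
    fun a => (M 0 a - M 1 a) ⊗ₖ (1 : Matrix (Fin ny) (Fin ny) ℂ) with hΔk
  have hΔk' : ∀ a, Δk a = N 0 a - N 1 a := fun a => kron_sub_left _ _ _
  set D : Fin K → Matrix (Fin nx × Fin ny) (Fin nx × Fin ny) ℂ :=
    fun a => N 0 a * ρ * (N 0 a)ᴴ - N 1 a * ρ * (N 1 a)ᴴ with hD
  have hdiff : postState ρ (M 0) - postState ρ (M 1)
      = ∑ a, Matrix.single a a (1 : ℂ) ⊗ₖ D a := by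
    unfold postState
    rw [← Finset.sum_sub_distrib]
    exact Finset.sum_congr rfl fun a _ => (kron_sub_right _ _ _).symm
  set R := hρ.sqrt with hR
  have hRH : Rᴴ = R := hρ.posSemidef_sqrt.1
  have hRR : R * R = ρ := hρ.sqrt_mul_self
  set x : Fin K → ℝ := fun a => (((Δk a)ᴴ * (Δk a) * ρ).trace).re with hx
  set y : Fin K → ℝ := fun a => (((N 0 a)ᴴ * (N 0 a) * ρ).trace).re with hy
  set z : Fin K → ℝ := fun a => (((N 1 a)ᴴ * (N 1 a) * ρ).trace).re with hz
  have hxnn : ∀ a, 0 ≤ x a := fun a => snorm_re_nonneg hρ _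
  have hynn : ∀ a, 0 ≤ y a := fun a => snorm_re_nonneg hρ _
  have hznn : ∀ a, 0 ≤ z a := fun a => snorm_re_nonneg hρ _
  have hmul : ∀ X Y : Matrix (Fin nx × Fin ny) (Fin nx × Fin ny) ℂ,
      (X * R) * (R * Yᴴ) = X * ρ * Yᴴ := by
    intro X Y
    calc X * R * (R * Yᴴ) = X * (R * R) * Yᴴ := by simp only [Matrix.mul_assoc]
      _ = X * ρ * Yᴴ := by rw [hRR]
  have hblock : ∀ a, traceNorm (D a)
      ≤ Real.sqrt (x a) * Real.sqrt (y a) + Real.sqrt (z a) * Real.sqrt (x a) := by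
    intro a
    have hsplit : D a = (Δk a * R) * (R * (N 0 a)ᴴ) + (N 1 a * R) * (R * (Δk a)ᴴ) := by
      rw [hD, hmul, hmul, hΔk' a]
      simp only [Matrix.sub_mul, Matrix.mul_sub, Matrix.conjTranspose_sub]
      abel
    calc traceNorm (D a)
        ≤ traceNorm ((Δk a * R) * (R * (N 0 a)ᴴ))
          + traceNorm ((N 1 a * R) * (R * (Δk a)ᴴ)) := by
          rw [hsplit]; exact traceNorm_add_le _ _
      _ ≤ Real.sqrt (frobSq (Δk a * R)) * Real.sqrt (frobSq (R * (N 0 a)ᴴ))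
          + Real.sqrt (frobSq (N 1 a * R)) * Real.sqrt (frobSq (R * (Δk a)ᴴ)) :=
          add_le_add (traceNorm_mul_le _ _) (traceNorm_mul_le _ _)
      _ = Real.sqrt (x a) * Real.sqrt (y a) + Real.sqrt (z a) * Real.sqrt (x a) := by
          rw [frobSq_mul_sqrt hρ, frobSq_mul_sqrt hρ, frobSq_sqrt_mul_ct hρ,
            frobSq_sqrt_mul_ct hρ]
  have hNsum : ∀ i, ∑ a, (N i a)ᴴ * (N i a) = 1 := by
    intro i
    have h1 : ∀ a, (N i a)ᴴ * (N i a)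
        = ((M i a)ᴴ * (M i a)) ⊗ₖ (1 : Matrix (Fin ny) (Fin ny) ℂ) := by
      intro a
      rw [hN]
      rw [kronecker_conjTranspose, ← Matrix.mul_kronecker_mul, Matrix.conjTranspose_one,
        Matrix.one_mul]
    rw [Finset.sum_congr rfl fun a _ => h1 a, kron_sum_left, hcomp i,
      Matrix.one_kronecker_one]
  have hsum1 : ∀ i, (∑ a, (((N i a)ᴴ * (N i a) * ρ).trace).re) = 1 := by
    intro i
    rw [← Complex.re_sum, ← Matrix.trace_sum, ← Finset.sum_mul, hNsum i, Matrix.one_mul, htr]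
    simp
  have hysum : ∑ a, y a = 1 := hsum1 0
  have hzsum : ∑ a, z a = 1 := hsum1 1
  have hCS : ∀ w : Fin K → ℝ, (∀ a, 0 ≤ w a) → (∑ a, w a) = 1 →
      ∑ a, Real.sqrt (x a) * Real.sqrt (w a) ≤ Real.sqrt (∑ a, x a) := by
    intro w hw hw1
    calc ∑ a, Real.sqrt (x a) * Real.sqrt (w a)
        ≤ Real.sqrt (∑ a, x a) * Real.sqrt (∑ a, w a) :=
          Real.sum_sqrt_mul_sqrt_le _ hxnn hw
      _ = Real.sqrt (∑ a, x a) := by rw [hw1, Real.sqrt_one, mul_one]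
  have hmain : traceNorm (postState ρ (M 0) - postState ρ (M 1))
      ≤ 2 * Real.sqrt (∑ a, x a) := by
    rw [hdiff, traceNorm_blockDiag]
    calc ∑ a, traceNorm (D a)
        ≤ ∑ a, (Real.sqrt (x a) * Real.sqrt (y a) + Real.sqrt (z a) * Real.sqrt (x a)) :=
          Finset.sum_le_sum fun a _ => hblock a
      _ = (∑ a, Real.sqrt (x a) * Real.sqrt (y a))
          + ∑ a, Real.sqrt (x a) * Real.sqrt (z a) := by
          rw [← Finset.sum_add_distrib]
          exact Finset.sum_congr rfl fun a _ => by rw [mul_comm (Real.sqrt (z a))]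
      _ ≤ Real.sqrt (∑ a, x a) + Real.sqrt (∑ a, x a) :=
          add_le_add (hCS y hynn hysum) (hCS z hznn hzsum)
      _ = 2 * Real.sqrt (∑ a, x a) := by ring
  have hgoal : (∑ a, snormSq ρ ((M 0 a - M 1 a) ⊗ₖ (1 : Matrix (Fin ny) (Fin ny) ℂ)))
      = ∑ a, x a := rfl
  rw [traceDist, hgoal]
  linarith
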